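/- Let a, c, ε₁, ε₂ be real numbers, let L ≥ 3 and t ≥ 1 be integers, set q_m = exp(iπm/L) for 0 ≤ m ≤ L−1, and for each m choose any W_m ∈ ℂ with W_m² = (a·q_m⁻¹ − c·q_m)² + 4ε₁ε₂. Then trace(M_L(A,B,C)^t) = Σ_{m=0}^{L−1} [ ((a·q_m⁻¹ + c·q_m + W_m)²/4)^t + ((a·q_m⁻¹ + c·q_m − W_m)²/4)^t ]. -/

import Mathlib

open Matrix

set_option linter.unusedSectionVars false
set_option maxHeartbeats 1000000

/-- The matrix `A = [[ε₁ε₂, cε₂], [aε₁, ε₁ε₂]]` regarded as a complex matrix. -/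
noncomputable def Amat (a c e1 e2 : ℝ) : Matrix (Fin 2) (Fin 2) ℂ :=
  !![((e1 * e2 : ℝ) : ℂ), ((c * e2 : ℝ) : ℂ); ((a * e1 : ℝ) : ℂ), ((e1 * e2 : ℝ) : ℂ)]

/-- The matrix `B = [[c², 0], [cε₁, 0]]` regarded as a complex matrix. -/
noncomputable def Bmat (a c e1 e2 : ℝ) : Matrix (Fin 2) (Fin 2) ℂ :=
  !![((c ^ 2 : ℝ) : ℂ), 0; ((c * e1 : ℝ) : ℂ), 0]

/-- The matrix `C = [[0, aε₂], [0, a²]]` regarded as a complex matrix. -/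
noncomputable def Cmat (a c e1 e2 : ℝ) : Matrix (Fin 2) (Fin 2) ℂ :=
  !![0, ((a * e2 : ℝ) : ℂ); 0, ((a ^ 2 : ℝ) : ℂ)]

/-- The block-circulant matrix `M_L(A,B,C)`: block `(i,j)` equals `A` if `j = i`,
`B` if `j = i + 1`, `C` if `j = i − 1` and `0` otherwise. -/
noncomputable def blockCirc (L n : ℕ) (A B C : Matrix (Fin n) (Fin n) ℂ) :
    Matrix (ZMod L × Fin n) (ZMod L × Fin n) ℂ :=
  fun p q =>
    if q.1 = p.1 then A p.2 q.2
    else if q.1 = p.1 + 1 then B p.2 q.2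
    else if q.1 = p.1 - 1 then C p.2 q.2
    else 0

namespace Stmt16Aux

/-! ### Additive characters of `ZMod L` -/

noncomputable def ψ (L : ℕ) (k : ZMod L) : ℂ :=
  Complex.exp (2 * Real.pi * Complex.I * k.val / L)

variable (L : ℕ) [NeZero L]

lemma psi_ne_zero (k : ZMod L) : ψ L k ≠ 0 := Complex.exp_ne_zero _

lemma psi_zero : ψ L 0 = 1 := by simp [ψ]

lemma psi_add (j k : ZMod L) : ψ L (j + k) = ψ L j * ψ L k := by
  have hL : (L : ℂ) ≠ 0 := Nat.cast_ne_zero.mpr (NeZero.ne L)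
  set d : ℕ := (j.val + k.val) / L with hd
  have hnat : j.val + k.val = (j + k).val + L * d := by
    rw [ZMod.val_add, hd]; exact (Nat.mod_add_div _ _).symm
  have hc : ((j.val : ℂ) + k.val) = ((j + k).val : ℂ) + L * d := by exact_mod_cast hnat
  have h1 : (2 * (Real.pi:ℂ) * Complex.I * j.val / L) + (2 * Real.pi * Complex.I * k.val / L)
      = 2 * Real.pi * Complex.I * (j + k).val / L + (d : ℤ) * (2 * Real.pi * Complex.I) := by
    rw [← add_div, div_add' _ _ _ hL, div_eq_div_iff hL hL]
    push_cast
    linear_combination (2 * (Real.pi:ℂ) * Complex.I * L) * hc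
  rw [ψ, ψ, ψ, ← Complex.exp_add, h1, Complex.exp_add,
    Complex.exp_int_mul_two_pi_mul_I, mul_one]

lemma psi_neg (k : ZMod L) : ψ L (-k) = (ψ L k)⁻¹ := by
  have h : ψ L (-k) * ψ L k = 1 := by
    rw [← psi_add]; simp [psi_zero]
  exact eq_inv_of_mul_eq_one_left h

lemma psi_ne_one {k : ZMod L} (hk : k ≠ 0) : ψ L k ≠ 1 := by
  intro h
  rw [ψ, Complex.exp_eq_one_iff] at h
  obtain ⟨n, hn⟩ := h
  have hL : (L : ℂ) ≠ 0 := Nat.cast_ne_zero.mpr (NeZero.ne L)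
  have hπ : (2 * (Real.pi : ℂ) * Complex.I) ≠ 0 := by
    simp [Real.pi_ne_zero, Complex.I_ne_zero]
  rw [div_eq_iff hL] at hn
  have hc : (k.val : ℂ) = (n : ℂ) * L := mul_left_cancel₀ hπ (by linear_combination hn)
  have hz : (k.val : ℤ) = n * L := by exact_mod_cast hc
  have hdvd : L ∣ k.val := by
    have : (L : ℤ) ∣ (k.val : ℤ) := ⟨n, by linarith⟩
    exact_mod_cast this
  have hv0 : k.val = 0 := Nat.eq_zero_of_dvd_of_lt hdvd (ZMod.val_lt k)
  exact hk ((ZMod.val_eq_zero k).mp hv0)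

lemma sum_psi_mul (d : ZMod L) :
    ∑ j : ZMod L, ψ L (d * j) = if d = 0 then (L : ℂ) else 0 := by
  split_ifs with h
  · subst h; simp [psi_zero, ZMod.card]
  · have key : ψ L d * ∑ j : ZMod L, ψ L (d * j) = ∑ j : ZMod L, ψ L (d * j) := by
      rw [Finset.mul_sum]
      refine Fintype.sum_equiv (Equiv.addRight (1 : ZMod L)) _ _ ?_
      intro j
      simp only [Equiv.coe_addRight]
      rw [mul_add, mul_one, psi_add]; ring
    have h2 : (ψ L d - 1) * ∑ j : ZMod L, ψ L (d * j) = 0 := by linear_combination key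
    rcases mul_eq_zero.mp h2 with h1 | h1
    · exact absurd (sub_eq_zero.mp h1) (psi_ne_one L h)
    · exact h1

/-! ### The Fourier conjugation matrices -/

noncomputable def Umat (L n : ℕ) : Matrix (ZMod L × Fin n) (ZMod L × Fin n) ℂ :=
  fun p q => if p.2 = q.2 then ψ L (-(p.1 * q.1)) / L else 0

noncomputable def Vmat (L n : ℕ) : Matrix (ZMod L × Fin n) (ZMod L × Fin n) ℂ :=
  fun p q => if p.2 = q.2 then ψ L (p.1 * q.1) else 0

noncomputable def Dmat (L n : ℕ) (N : ZMod L → Matrix (Fin n) (Fin n) ℂ) :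
    Matrix (ZMod L × Fin n) (ZMod L × Fin n) ℂ :=
  fun p q => if p.1 = q.1 then N p.1 p.2 q.2 else 0

lemma key_sum (m k : ZMod L) :
    ∑ j : ZMod L, ψ L (-(m * j)) * ψ L (j * k) = if k = m then (L : ℂ) else 0 := by
  have h : ∀ j : ZMod L, ψ L (-(m * j)) * ψ L (j * k) = ψ L ((k - m) * j) := by
    intro j; rw [← psi_add]; congr 1; ring
  simp_rw [h, sum_psi_mul]
  simp [sub_eq_zero]

lemma UV_eq_one (n : ℕ) : Umat L n * Vmat L n = 1 := by
  have hL : (L : ℂ) ≠ 0 := Nat.cast_ne_zero.mpr (NeZero.ne L)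
  ext ⟨m, i⟩ ⟨k, r⟩
  rw [Matrix.mul_apply, Fintype.sum_prod_type]
  simp only [Umat, Vmat, ite_mul, zero_mul, mul_ite, mul_zero,
    Finset.sum_ite_eq, Finset.sum_ite_eq', Finset.mem_univ, if_true]
  by_cases hir : i = r
  · subst hir
    simp only [eq_self_iff_true, if_true]
    simp_rw [div_mul_eq_mul_div]
    rw [← Finset.sum_div, key_sum]
    rw [Matrix.one_apply]
    by_cases hmk : k = m
    · subst hmk
      simp [div_self hL]
    · simp [hmk, Ne.symm hmk, Prod.ext_iff]
  · simp [hir, Matrix.one_apply, Prod.ext_iff]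

lemma MV_eq (hL3 : 3 ≤ L) (n : ℕ) (A B C : Matrix (Fin n) (Fin n) ℂ) :
    blockCirc L n A B C * Vmat L n =
      Vmat L n * Dmat L n (fun m => A + ψ L m • B + ψ L (-m) • C) := by
  haveI : Fact (1 < L) := ⟨by omega⟩
  have h1 : (1 : ZMod L) ≠ 0 := one_ne_zero
  have h2 : (2 : ZMod L) ≠ 0 := by
    intro h
    have h' : ((2 : ℕ) : ZMod L) = 0 := by exact_mod_cast h
    rw [ZMod.natCast_eq_zero_iff] at h'
    have := Nat.le_of_dvd (by norm_num) h'
    omega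
  ext ⟨m, i⟩ ⟨k, r⟩
  have d1 : m + 1 ≠ m := fun h => h1 (add_eq_left.mp h)
  have d2 : m - 1 ≠ m := fun h => h1 (sub_eq_self.mp h)
  have d3 : m + 1 ≠ m - 1 := by
    intro h
    have h4 : m + 2 = m := by
      rw [show m + 2 = m + 1 + 1 by ring, h]; ring
    exact h2 (add_eq_left.mp h4)
  have hsplit : ∀ (j : ZMod L) (X Y Z : ℂ),
      (if j = m then X else if j = m + 1 then Y else if j = m - 1 then Z else 0)
        = (if j = m then X else 0) + (if j = m + 1 then Y else 0)
          + (if j = m - 1 then Z else 0) := by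
    intro j X Y Z
    by_cases e1 : j = m <;> by_cases e2 : j = m + 1 <;> by_cases e3 : j = m - 1 <;>
      simp_all
  rw [Matrix.mul_apply, Matrix.mul_apply, Fintype.sum_prod_type, Fintype.sum_prod_type]
  simp only [blockCirc, Vmat, Dmat, mul_ite, mul_zero, ite_mul, zero_mul,
    Finset.sum_ite_eq', Finset.sum_ite_eq, Finset.mem_univ, if_true]
  simp_rw [hsplit]
  simp only [Finset.sum_add_distrib, add_mul, ite_mul, zero_mul, mul_ite, mul_zero,
    Finset.sum_ite_eq', Finset.sum_ite_eq, Finset.mem_univ, if_true]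
  rw [Finset.sum_comm]
  simp only [Finset.sum_ite_eq', Finset.sum_ite_eq, Finset.mem_univ, if_true]
  simp only [Matrix.add_apply, Matrix.smul_apply, smul_eq_mul, psi_add]
  rw [show ((m - 1) * k) = m * k + (-k) by ring, psi_add, show (1 : ZMod L) * k = k by ring]
  ring

lemma Mpow_V (hL3 : 3 ≤ L) (n : ℕ) (A B C : Matrix (Fin n) (Fin n) ℂ) (t : ℕ) :
    blockCirc L n A B C ^ t * Vmat L n =
      Vmat L n * Dmat L n (fun m => A + ψ L m • B + ψ L (-m) • C) ^ t := by
  induction t with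
  | zero => simp
  | succ t ih =>
    rw [pow_succ, pow_succ, mul_assoc, MV_eq L hL3, ← mul_assoc, ih, mul_assoc]

lemma submatrix_pow_equiv {α β : Type*} [Fintype α] [Fintype β] [DecidableEq α] [DecidableEq β]
    (e : α ≃ β) (X : Matrix β β ℂ) (t : ℕ) :
    (X.submatrix e e) ^ t = (X ^ t).submatrix e e := by
  induction t with
  | zero => simp [Matrix.submatrix_one_equiv]
  | succ t ih => rw [pow_succ, pow_succ, ih, Matrix.submatrix_mul_equiv]

lemma trace_submatrix_equiv {α β : Type*} [Fintype α] [Fintype β]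
    (e : α ≃ β) (X : Matrix β β ℂ) : (X.submatrix e e).trace = X.trace := by
  rw [Matrix.trace, Matrix.trace]
  exact Fintype.sum_equiv e _ _ (fun i => rfl)

lemma trace_M_pow (hL3 : 3 ≤ L) (n : ℕ) (A B C : Matrix (Fin n) (Fin n) ℂ) (t : ℕ) :
    (blockCirc L n A B C ^ t).trace =
      ∑ m : ZMod L, ((A + ψ L m • B + ψ L (-m) • C) ^ t).trace := by
  classical
  set N : ZMod L → Matrix (Fin n) (Fin n) ℂ := fun m => A + ψ L m • B + ψ L (-m) • C with hN
  have hUV := UV_eq_one L n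
  have hVU : Vmat L n * Umat L n = 1 := mul_eq_one_comm.mp hUV
  have hM : blockCirc L n A B C ^ t = Vmat L n * Dmat L n N ^ t * Umat L n := by
    calc blockCirc L n A B C ^ t
        = blockCirc L n A B C ^ t * (Vmat L n * Umat L n) := by rw [hVU, mul_one]
      _ = (blockCirc L n A B C ^ t * Vmat L n) * Umat L n := by rw [mul_assoc]
      _ = Vmat L n * Dmat L n N ^ t * Umat L n := by rw [Mpow_V L hL3]
  rw [hM, Matrix.trace_mul_comm, ← mul_assoc, hUV, one_mul]
  -- now identify Dmat with a reindexed block diagonal matrix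
  set e : ZMod L × Fin n ≃ Fin n × ZMod L := Equiv.prodComm _ _ with he
  have hD : Dmat L n N = (Matrix.blockDiagonal N).submatrix e e := by
    ext ⟨m, i⟩ ⟨k, r⟩
    simp [Dmat, Matrix.blockDiagonal_apply, he]
  rw [hD, submatrix_pow_equiv, trace_submatrix_equiv, ← Matrix.blockDiagonal_pow,
    Matrix.trace_blockDiagonal]
  simp [Pi.pow_apply]
  rfl

/-! ### 2×2 trace-power identities -/

lemma cayley2 (N : Matrix (Fin 2) (Fin 2) ℂ) : N ^ 2 = N.trace • N - N.det • 1 := by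
  ext i j
  rw [pow_two]
  fin_cases i <;> fin_cases j <;>
    simp [Matrix.mul_apply, Fin.sum_univ_two, Matrix.trace_fin_two, Matrix.det_fin_two,
      Matrix.one_apply] <;> ring

lemma trace_pow_eigen (N : Matrix (Fin 2) (Fin 2) ℂ) (l μ : ℂ)
    (h1 : N.trace = l + μ) (h2 : N.det = l * μ) (s : ℕ) :
    (N ^ (s + 1)).trace = l ^ (s + 1) + μ ^ (s + 1) ∧
      (N ^ (s + 2)).trace = l ^ (s + 2) + μ ^ (s + 2) := by
  induction s with
  | zero =>
    constructor
    · simpa using h1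
    · rw [show (0 + 2) = 2 from rfl, cayley2, Matrix.trace_sub, Matrix.trace_smul,
        Matrix.trace_smul, Matrix.trace_one, h1, h2]
      simp only [smul_eq_mul, Fintype.card_fin, Nat.cast_ofNat]
      ring
  | succ s ih =>
    refine ⟨ih.2, ?_⟩
    have hrec : N ^ (s + 3) = N.trace • N ^ (s + 2) - N.det • N ^ (s + 1) := by
      have h3 : N ^ (s + 3) = N ^ (s + 1) * N ^ 2 := by rw [← pow_add]
      rw [h3, cayley2, mul_sub, mul_smul_comm, mul_smul_comm, mul_one, ← pow_succ]
    rw [show s + 1 + 2 = s + 3 from rfl, hrec, Matrix.trace_sub, Matrix.trace_smul,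
      Matrix.trace_smul, ih.1, ih.2, h1, h2]
    simp only [smul_eq_mul]
    ring

/-! ### The per-block eigenvalue computation -/

noncomputable def Nm (a c e1 e2 : ℝ) (L : ℕ) (m : ZMod L) : Matrix (Fin 2) (Fin 2) ℂ :=
  Amat a c e1 e2 + ψ L m • Bmat a c e1 e2 + ψ L (-m) • Cmat a c e1 e2

variable (a c e1 e2 : ℝ)

lemma trace_Nm (m : ZMod L) :
    (Nm a c e1 e2 L m).trace =
      2 * ((e1 : ℂ) * e2) + ψ L m * c ^ 2 + (ψ L m)⁻¹ * a ^ 2 := by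
  simp [Nm, Amat, Bmat, Cmat, Matrix.trace_fin_two, psi_neg]
  ring

lemma det_Nm (m : ZMod L) :
    (Nm a c e1 e2 L m).det =
      ((e1 : ℂ) * e2) ^ 2 + ((a : ℂ) * c) ^ 2 - 2 * ((a : ℂ) * c) * ((e1 : ℂ) * e2) := by
  have h := psi_ne_zero L m
  simp [Nm, Amat, Bmat, Cmat, Matrix.det_fin_two, psi_neg]
  field_simp
  ring

lemma psi_natCast (k : ℕ) (hk : k < L) :
    ψ L (k : ZMod L) = Complex.exp (Real.pi * Complex.I * k / L) ^ 2 := by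
  rw [ψ, ZMod.val_natCast_of_lt hk, sq, ← Complex.exp_add]
  congr 1
  ring

lemma eigen_match (k : ℕ) (hk : k < L) (W : ℂ)
    (hW : W ^ 2 =
      ((a : ℂ) * (Complex.exp (Real.pi * Complex.I * k / L))⁻¹
          - (c : ℂ) * Complex.exp (Real.pi * Complex.I * k / L)) ^ 2
        + 4 * (e1 : ℂ) * (e2 : ℂ)) :
    (Nm a c e1 e2 L (k : ZMod L)).trace =
        (((a : ℂ) * (Complex.exp (Real.pi * Complex.I * k / L))⁻¹
            + (c : ℂ) * Complex.exp (Real.pi * Complex.I * k / L) + W) ^ 2 / 4)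
        + (((a : ℂ) * (Complex.exp (Real.pi * Complex.I * k / L))⁻¹
            + (c : ℂ) * Complex.exp (Real.pi * Complex.I * k / L) - W) ^ 2 / 4) ∧
    (Nm a c e1 e2 L (k : ZMod L)).det =
        (((a : ℂ) * (Complex.exp (Real.pi * Complex.I * k / L))⁻¹
            + (c : ℂ) * Complex.exp (Real.pi * Complex.I * k / L) + W) ^ 2 / 4)
        * (((a : ℂ) * (Complex.exp (Real.pi * Complex.I * k / L))⁻¹
            + (c : ℂ) * Complex.exp (Real.pi * Complex.I * k / L) - W) ^ 2 / 4) := by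
  set q : ℂ := Complex.exp (Real.pi * Complex.I * k / L) with hqdef
  have hq : q ≠ 0 := Complex.exp_ne_zero _
  set r : ℂ := q⁻¹ with hrdef
  have hr : q * r = 1 := mul_inv_cancel₀ hq
  have hpsi : ψ L (k : ZMod L) = q ^ 2 := psi_natCast L k hk
  have hpsiinv : (ψ L (k : ZMod L))⁻¹ = r ^ 2 := by rw [hpsi, hrdef, inv_pow]
  constructor
  · rw [trace_Nm, hpsiinv, hpsi]
    linear_combination -hW / 2
  · rw [det_Nm]
    have hW4 : (W ^ 2) ^ 2 = (((a : ℂ) * r - c * q) ^ 2 + 4 * e1 * e2) ^ 2 := by rw [hW]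
    linear_combination (-(1:ℂ)/16) * hW4
      + (((a:ℂ)*c*q*r - (e1:ℂ)*e2)/2 + (((a:ℂ)*r - c*q)^2 + 4*(e1:ℂ)*e2)/8) * hW
      + (-((a:ℂ)*c) * ((a:ℂ)*c*(q*r+1) - 2*(e1:ℂ)*e2)) * hr

lemma sum_zmod (f : ZMod L → ℂ) :
    ∑ m : ZMod L, f m = ∑ k ∈ Finset.range L, f (k : ZMod L) := by
  refine Finset.sum_nbij' (fun m => m.val) (fun k => (k : ZMod L)) ?_ ?_ ?_ ?_ ?_
  · intro m _; exact Finset.mem_range.mpr (ZMod.val_lt m)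
  · intro k _; exact Finset.mem_univ _
  · intro m _; exact ZMod.natCast_zmod_val m
  · intro k hk; exact ZMod.val_natCast_of_lt (Finset.mem_range.mp hk)
  · intro m _; rw [ZMod.natCast_zmod_val]

end Stmt16Aux

open Stmt16Aux in
theorem stmt16 (a c e1 e2 : ℝ) (L t : ℕ) [NeZero L] (hL : 3 ≤ L) (ht : 1 ≤ t)
    (W : ℕ → ℂ)
    (hW : ∀ m < L, (W m) ^ 2 =
      ((a : ℂ) * (Complex.exp (Real.pi * Complex.I * m / L))⁻¹
          - (c : ℂ) * Complex.exp (Real.pi * Complex.I * m / L)) ^ 2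
        + 4 * (e1 : ℂ) * (e2 : ℂ)) :
    Matrix.trace (blockCirc L 2 (Amat a c e1 e2) (Bmat a c e1 e2) (Cmat a c e1 e2) ^ t) =
      ∑ m ∈ Finset.range L,
        ((((a : ℂ) * (Complex.exp (Real.pi * Complex.I * m / L))⁻¹
              + (c : ℂ) * Complex.exp (Real.pi * Complex.I * m / L) + W m) ^ 2 / 4) ^ t
          + (((a : ℂ) * (Complex.exp (Real.pi * Complex.I * m / L))⁻¹
              + (c : ℂ) * Complex.exp (Real.pi * Complex.I * m / L) - W m) ^ 2 / 4) ^ t) := by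
  obtain ⟨s, rfl⟩ : ∃ s, t = s + 1 := ⟨t - 1, by omega⟩
  rw [trace_M_pow L hL 2 (Amat a c e1 e2) (Bmat a c e1 e2) (Cmat a c e1 e2) (s + 1)]
  rw [sum_zmod]
  refine Finset.sum_congr rfl ?_
  intro k hk
  rw [Finset.mem_range] at hk
  obtain ⟨h1, h2⟩ := eigen_match L a c e1 e2 k hk (W k) (hW k hk)
  exact (trace_pow_eigen _ _ _ h1 h2 s).1
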